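/- Let v⁻, v⁺, B ∈ ℝ³ and θ ∈ ℝ. If v⁺ − v⁻ = θ • ((v⁺ + v⁻) ×₃ B), then ‖v⁺‖ = ‖v⁻‖. -/

import Mathlib

noncomputable section

/-- The three-dimensional cross product on `EuclideanSpace ℝ (Fin 3)`. -/
def cross3 (a b : EuclideanSpace ℝ (Fin 3)) : EuclideanSpace ℝ (Fin 3) :=
  WithLp.toLp 2 (crossProduct a b)

infixl:74 " ×₃ " => cross3

/-- The rotation step of the Boris integrator,
`v⁺ − v⁻ = θ • ((v⁺ + v⁻) ×₃ B)` with `θ = αΔt/2`, preserves the Euclidean norm. -/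
theorem boris_rotation_preserves_norm
    (vminus vplus B : EuclideanSpace ℝ (Fin 3)) (θ : ℝ)
    (h : vplus - vminus = θ • ((vplus + vminus) ×₃ B)) :
    ‖vplus‖ = ‖vminus‖ := by
  have horth : (inner ℝ (vplus + vminus) ((vplus + vminus) ×₃ B) : ℝ) = 0 := by
    have hd := dot_self_cross (vplus + vminus : EuclideanSpace ℝ (Fin 3)).ofLp B
    simpa [PiLp.inner_apply, dotProduct, cross3, mul_comm] using hd
  have key : (inner ℝ (vplus + vminus) (vplus - vminus) : ℝ) = 0 := by
    rw [h, real_inner_smul_right, horth, mul_zero]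
  have hsq : ‖vplus‖ ^ 2 = ‖vminus‖ ^ 2 := by
    have expand : (inner ℝ (vplus + vminus) (vplus - vminus) : ℝ)
        = ‖vplus‖ ^ 2 - ‖vminus‖ ^ 2 := by
      rw [inner_add_left, inner_sub_right, inner_sub_right,
        real_inner_self_eq_norm_sq, real_inner_self_eq_norm_sq,
        real_inner_comm vminus vplus]
      ring
    have := expand ▸ key
    linarith
  have h1 : (0:ℝ) ≤ ‖vplus‖ := norm_nonneg _
  have h2 : (0:ℝ) ≤ ‖vminus‖ := norm_nonneg _
  nlinarith [sq_nonneg (‖vplus‖ - ‖vminus‖), sq_nonneg (‖vplus‖ + ‖vminus‖)]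

end
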